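/- Let n ≥ 3 be odd, let ζ be a primitive n-th root of unity in ℂ, and set γ_k = ζ^k + ζ^{-k}, δ_k = ζ^k - ζ^{-k}. Then for every a ∈ ℂ, as polynomials in two variables x, y, one has D_n(x, a) - D_n(y, a) = (x - y) · ∏_{k=1}^{(n-1)/2} (x² - γ_k·x·y + y² + δ_k²·a). -/

import Mathlib

/-- The Dickson polynomials (as functions): `D 0 a x = 2`, `D 1 a x = x`,
`D (n+2) a x = x * D (n+1) a x - a * D n a x`. -/
def dicksonC : ℕ → ℂ → ℂ → ℂ
  | 0, _, _ => 2
  | 1, _, x => x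
  | n + 2, a, x => x * dicksonC (n + 1) a x - a * dicksonC n a x

lemma dicksonC_add (a u v : ℂ) (h : u * v = a) :
    ∀ n, dicksonC n a (u + v) = u ^ n + v ^ n := by
  have H : ∀ n, dicksonC n a (u + v) = u ^ n + v ^ n ∧
      dicksonC (n + 1) a (u + v) = u ^ (n + 1) + v ^ (n + 1) := by
    intro n
    induction n with
    | zero => refine ⟨by simp [dicksonC]; norm_num, by simp [dicksonC]⟩
    | succ k ih =>
      refine ⟨ih.2, ?_⟩
      show (u + v) * dicksonC (k + 1) a (u + v) - a * dicksonC k a (u + v) = _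
      rw [ih.1, ih.2, ← h]
      ring
  exact fun n => (H n).1

lemma pow_sub_pow_prod {n : ℕ} {ζ : ℂ} (hζ : IsPrimitiveRoot ζ n) (hn : 0 < n) (s t : ℂ) :
    s ^ n - t ^ n = ∏ i ∈ Finset.range n, (s - ζ ^ i * t) := by
  have h := X_pow_sub_C_eq_prod hζ hn (rfl : t ^ n = t ^ n)
  have h2 := congrArg (Polynomial.eval s) h
  simpa [Polynomial.eval_prod] using h2

lemma prod_pair {n m : ℕ} (hm : n = 2 * m + 1) {ζ : ℂ} (hζ : IsPrimitiveRoot ζ n)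
    (f : ℂ → ℂ) :
    ∏ i ∈ Finset.range n, f (ζ ^ i) =
      f 1 * ∏ k ∈ Finset.Icc 1 m, (f (ζ ^ k) * f (ζ⁻¹ ^ k)) := by
  have key : ∀ i, i ≤ n → ζ ^ i = ζ⁻¹ ^ (n - i) := by
    intro i hi
    rw [inv_pow]
    refine (inv_eq_of_mul_eq_one_left ?_).symm
    rw [← pow_add, show i + (n - i) = n by omega, hζ.pow_eq_one]
  have h1 : Finset.range n = insert 0 (Finset.Icc 1 (2 * m)) := by
    ext i; simp only [Finset.mem_range, Finset.mem_insert, Finset.mem_Icc]; omega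
  rw [h1, Finset.prod_insert (by simp), pow_zero]
  congr 1
  have h2 : Finset.Icc 1 (2 * m) = Finset.Icc 1 m ∪ Finset.Icc (m + 1) (2 * m) := by
    ext i; simp only [Finset.mem_Icc, Finset.mem_union]; omega
  have hdis : Disjoint (Finset.Icc 1 m) (Finset.Icc (m + 1) (2 * m)) := by
    rw [Finset.disjoint_left]
    intro i hi h2i
    simp only [Finset.mem_Icc] at hi h2i
    omega
  rw [h2, Finset.prod_union hdis, Finset.prod_mul_distrib]
  congr 1
  refine Finset.prod_nbij' (fun i => n - i) (fun k => n - k) ?_ ?_ ?_ ?_ ?_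
  · intro i hi
    simp only [Finset.mem_Icc] at hi ⊢
    omega
  · intro k hk
    simp only [Finset.mem_Icc] at hk ⊢
    omega
  · intro i hi
    simp only [Finset.mem_Icc] at hi
    show n - (n - i) = i
    omega
  · intro k hk
    simp only [Finset.mem_Icc] at hk
    show n - (n - k) = k
    omega
  · intro i hi
    simp only [Finset.mem_Icc] at hi
    exact congrArg f (key i (by omega))

lemma factor_eq (a u u' v v' c d : ℂ) (h1 : u * u' = a) (h2 : v * v' = a) (h3 : c * d = 1) :
    ((u + u') ^ 2 - (c + d) * (u + u') * (v + v') + (v + v') ^ 2 + (c - d) ^ 2 * a) *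
        (u * v) ^ 2 =
      ((u - c * v) * (u - d * v)) * ((u * v - c * a) * (u * v - d * a)) := by
  linear_combination
    (v^2*a - u*v^2*v'*d - u*v^2*v'*c - u*v^3*d - u*v^3*c + u*u'*v^2 + 2*u^2*v^2) * h1 +
    (-(u*v*d*a) - u*v*c*a + u^2*a + u^2*v*v' + 2*u^2*v^2 - u^3*v*d - u^3*v*c) * h2 +
    (-(v^2*a^2) - v^2*c*d*a^2 + u*v*d*a^2 + u*v*c*a^2 + u*v^3*d*a + u*v^3*c*a - u^2*a^2
      - 4*u^2*v^2*a - u^2*v^4) * h3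

/-- For odd `n ≥ 3` and `ζ` a primitive `n`-th root of unity, with
`γ_k = ζᵏ + ζ⁻ᵏ` and `δ_k = ζᵏ - ζ⁻ᵏ`, one has
`D n (x,a) - D n (y,a) = (x-y) ∏_{k=1}^{(n-1)/2} (x² - γ_k x y + y² + δ_k² a)`. -/
theorem dickson_diff_factorization_odd (n : ℕ) (hn : 3 ≤ n) (hodd : Odd n)
    (ζ : ℂ) (hζ : IsPrimitiveRoot ζ n) (a : ℂ) : ∀ x y : ℂ,
    dicksonC n a x - dicksonC n a y =
      (x - y) * ∏ k ∈ Finset.Icc 1 ((n - 1) / 2),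
        (x ^ 2 - (ζ ^ k + ζ⁻¹ ^ k) * x * y + y ^ 2 + (ζ ^ k - ζ⁻¹ ^ k) ^ 2 * a) := by
  intro x y
  obtain ⟨m, hm⟩ := hodd
  have hm' : n = 2 * m + 1 := by omega
  have hdiv : (n - 1) / 2 = m := by omega
  rw [hdiv]
  have hn0 : 0 < n := by omega
  have hζ0 : ζ ≠ 0 := by
    intro h
    have h1 := hζ.pow_eq_one
    rw [h, zero_pow (by omega : n ≠ 0)] at h1
    exact zero_ne_one h1
  have hpowone : ∀ k : ℕ, ζ ^ k * ζ⁻¹ ^ k = 1 := by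
    intro k
    rw [← mul_pow, mul_inv_cancel₀ hζ0, one_pow]
  by_cases ha : a = 0
  · subst ha
    have hdx : dicksonC n 0 x = x ^ n := by
      have h := dicksonC_add 0 x 0 (by ring) n
      simpa [zero_pow (by omega : n ≠ 0)] using h
    have hdy : dicksonC n 0 y = y ^ n := by
      have h := dicksonC_add 0 y 0 (by ring) n
      simpa [zero_pow (by omega : n ≠ 0)] using h
    rw [hdx, hdy, pow_sub_pow_prod hζ hn0 x y,
      prod_pair hm' hζ (fun z => x - z * y)]
    simp only [one_mul]
    congr 1
    refine Finset.prod_congr rfl ?_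
    intro k _
    linear_combination (y ^ 2 : ℂ) * hpowone k
  · -- a ≠ 0 : choose u, u', v, v'
    obtain ⟨s, hs⟩ := IsAlgClosed.exists_pow_nat_eq (x ^ 2 - 4 * a) (zero_lt_two) (k := ℂ)
    obtain ⟨t, ht⟩ := IsAlgClosed.exists_pow_nat_eq (y ^ 2 - 4 * a) (zero_lt_two) (k := ℂ)
    set u : ℂ := (x + s) / 2 with hu_def
    set u' : ℂ := (x - s) / 2 with hu'_def
    set v : ℂ := (y + t) / 2 with hv_def
    set v' : ℂ := (y - t) / 2 with hv'_def
    have hxu : x = u + u' := by rw [hu_def, hu'_def]; ring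
    have hyv : y = v + v' := by rw [hv_def, hv'_def]; ring
    have huu' : u * u' = a := by
      rw [hu_def, hu'_def]
      linear_combination (-(1:ℂ)/4) * hs
    have hvv' : v * v' = a := by
      rw [hv_def, hv'_def]
      linear_combination (-(1:ℂ)/4) * ht
    have hu0 : u ≠ 0 := fun h => ha (by rw [← huu', h, zero_mul])
    have hv0 : v ≠ 0 := fun h => ha (by rw [← hvv', h, zero_mul])
    have hdx : dicksonC n a x = u ^ n + u' ^ n := by
      rw [hxu]; exact dicksonC_add a u u' huu' n
    have hdy : dicksonC n a y = v ^ n + v' ^ n := by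
      rw [hyv]; exact dicksonC_add a v v' hvv' n
    rw [hdx, hdy]
    have hUV : (u * v) ^ n ≠ 0 := pow_ne_zero _ (mul_ne_zero hu0 hv0)
    apply mul_right_cancel₀ hUV
    -- left side
    have e1 : u ^ n * u' ^ n = a ^ n := by rw [← mul_pow, huu']
    have e2 : v ^ n * v' ^ n = a ^ n := by rw [← mul_pow, hvv']
    have claim1 : (u ^ n + u' ^ n - (v ^ n + v' ^ n)) * (u * v) ^ n =
        (u ^ n - v ^ n) * ((u * v) ^ n - a ^ n) := by
      rw [mul_pow]
      linear_combination (v ^ n) * e1 - (u ^ n) * e2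
    rw [claim1]
    -- right side
    have hcard : (Finset.Icc 1 m).card = m := by rw [Nat.card_Icc]; omega
    have hpow : (u * v) ^ n = (u * v) * ((u * v) ^ 2) ^ m := by
      rw [hm', pow_succ, pow_mul]; ring
    have hfac : ∀ k ∈ Finset.Icc 1 m,
        (x ^ 2 - (ζ ^ k + ζ⁻¹ ^ k) * x * y + y ^ 2 + (ζ ^ k - ζ⁻¹ ^ k) ^ 2 * a) * (u * v) ^ 2 =
          ((u - ζ ^ k * v) * (u - ζ⁻¹ ^ k * v)) *
            ((u * v - ζ ^ k * a) * (u * v - ζ⁻¹ ^ k * a)) := by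
      intro k _
      rw [hxu, hyv]
      exact factor_eq a u u' v v' (ζ ^ k) (ζ⁻¹ ^ k) huu' hvv' (hpowone k)
    have step1 : ((x - y) * ∏ k ∈ Finset.Icc 1 m,
          (x ^ 2 - (ζ ^ k + ζ⁻¹ ^ k) * x * y + y ^ 2 + (ζ ^ k - ζ⁻¹ ^ k) ^ 2 * a)) *
          (u * v) ^ n =
        ((x - y) * (u * v)) * ∏ k ∈ Finset.Icc 1 m,
          ((x ^ 2 - (ζ ^ k + ζ⁻¹ ^ k) * x * y + y ^ 2 + (ζ ^ k - ζ⁻¹ ^ k) ^ 2 * a) *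
            (u * v) ^ 2) := by
      rw [Finset.prod_mul_distrib, Finset.prod_const, hcard, hpow]
      ring
    rw [step1, Finset.prod_congr rfl hfac, Finset.prod_mul_distrib]
    have step3 : (x - y) * (u * v) = (u - v) * (u * v - a) := by
      rw [hxu, hyv]
      linear_combination v * huu' - u * hvv'
    rw [step3]
    have step4 : (u - v) * ∏ k ∈ Finset.Icc 1 m, ((u - ζ ^ k * v) * (u - ζ⁻¹ ^ k * v)) =
        u ^ n - v ^ n := by
      rw [pow_sub_pow_prod hζ hn0 u v, prod_pair hm' hζ (fun z => u - z * v)]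
      simp only [one_mul]
    have step5 : (u * v - a) * ∏ k ∈ Finset.Icc 1 m,
        ((u * v - ζ ^ k * a) * (u * v - ζ⁻¹ ^ k * a)) = (u * v) ^ n - a ^ n := by
      rw [pow_sub_pow_prod hζ hn0 (u * v) a, prod_pair hm' hζ (fun z => u * v - z * a)]
      simp only [one_mul]
    rw [← step4, ← step5]
    ring
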